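/- arXiv:2403.09701 — 3 statements merged into one kernel-verified Lean document; each statement's English description precedes it below -/
import Mathlib

section
/- Let a_1,...,a_T be nonnegative reals and c > 0 such that a_t ≤ c for all t. Then ∑_{t=1}^T a_t / (c + ∑_{i=1}^{t-1} a_i) ≤ 2·log(1 + T). -/
lemma key {u : ℝ} (h0 : 0 ≤ u) (h1 : u ≤ 1) : u ≤ 2 * Real.log (1 + u) := by
  have hpos : (0:ℝ) < 1 + u := by linarith
  have := Real.one_sub_inv_le_log_of_pos hpos
  have hinv : 1 - (1+u)⁻¹ = u / (1+u) := by
    field_simp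
    ring
  rw [hinv] at this
  have : u / 2 ≤ Real.log (1 + u) := by
    refine le_trans ?_ this
    apply div_le_div_of_nonneg_left h0 (by linarith) (by linarith)
  linarith

theorem stmt_1 (T : ℕ) (a : ℕ → ℝ) (c : ℝ) (hc : 0 < c)
    (ha : ∀ t < T, 0 ≤ a t) (hac : ∀ t < T, a t ≤ c) :
    ∑ t ∈ Finset.range T, a t / (c + ∑ i ∈ Finset.range t, a i)
      ≤ 2 * Real.log (1 + T) := by
  set S : ℕ → ℝ := fun t => c + ∑ i ∈ Finset.range t, a i with hS
  have hmain : ∀ n ≤ T, ∑ t ∈ Finset.range n, a t / S t ≤ 2 * Real.log (S n / c) := by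
    intro n hn
    induction n with
    | zero => simp [hS, div_self hc.ne']
    | succ k ih =>
      have hk : k ≤ T := le_of_lt hn
      have hSk : 0 < S k := by
        have : 0 ≤ ∑ i ∈ Finset.range k, a i :=
          Finset.sum_nonneg fun i hi => ha i (lt_of_lt_of_le (Finset.mem_range.mp hi) hk)
        simp only [hS]; linarith
      have hak0 : 0 ≤ a k := ha k hn
      have hakc : a k ≤ c := hac k hn
      have hu1 : a k / S k ≤ 1 := by
        rw [div_le_one hSk]
        have : c ≤ S k := by
          have : 0 ≤ ∑ i ∈ Finset.range k, a i :=
            Finset.sum_nonneg fun i hi => ha i (lt_of_lt_of_le (Finset.mem_range.mp hi) hk)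
          simp only [hS]; linarith
        linarith
      have hstep : a k / S k ≤ 2 * Real.log (S (k+1) / S k) := by
        have := key (div_nonneg hak0 hSk.le) hu1
        have heq : 1 + a k / S k = S (k+1) / S k := by
          field_simp [hS, Finset.sum_range_succ]
          simp only [hS, Finset.sum_range_succ]
          ring
        rwa [heq] at this
      have hSk1 : 0 < S (k+1) := by
        simp only [hS, Finset.sum_range_succ]
        simp only [hS] at hSk; linarith
      rw [Finset.sum_range_succ]
      have hlog : Real.log (S k / c) + Real.log (S (k+1) / S k) = Real.log (S (k+1) / c) := by
        rw [← Real.log_mul (by positivity) (by positivity)]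
        congr 1
        field_simp
      have := ih hk
      linarith
  have h1 : ∑ t ∈ Finset.range T, a t / S t ≤ 2 * Real.log (S T / c) := hmain T le_rfl
  have h2 : S T / c ≤ 1 + T := by
    rw [div_le_iff₀ hc]
    have : ∑ i ∈ Finset.range T, a i ≤ ∑ i ∈ Finset.range T, c :=
      Finset.sum_le_sum fun i hi => hac i (Finset.mem_range.mp hi)
    simp only [Finset.sum_const, Finset.card_range, nsmul_eq_mul] at this
    push_cast
    simp only [hS]
    nlinarith
  have hST : 0 < S T := by
    have : 0 ≤ ∑ i ∈ Finset.range T, a i :=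
      Finset.sum_nonneg fun i hi => ha i (Finset.mem_range.mp hi)
    simp only [hS]; linarith
  have h3 : Real.log (S T / c) ≤ Real.log (1 + T) :=
    Real.log_le_log (by positivity) h2
  linarith
end

section
/- Let Λ_0 be a positive definite d×d real matrix with smallest eigenvalue at least 1, and let φ_1,...,φ_t ∈ ℝ^d with ‖φ_j‖ ≤ 1 for all j. Define Λ_j = Λ_0 + ∑_{i=1}^j φ_i φ_i^T. Then log(det(Λ_t)/det(Λ_0)) ≤ ∑_{j=1}^t φ_j^T Λ_{j-1}^{-1} φ_j ≤ 2·log(det(Λ_t)/det(Λ_0)). -/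
open Matrix

lemma aux_dot_self_nonneg {d : ℕ} (v : Fin d → ℝ) : 0 ≤ v ⬝ᵥ v := by
  simpa [dotProduct] using Finset.sum_nonneg fun i _ => mul_self_nonneg (v i)

lemma aux_vecMulVec_posSemidef {d : ℕ} (v : Fin d → ℝ) :
    (vecMulVec v v).PosSemidef := by
  rw [posSemidef_iff_dotProduct_mulVec]
  constructor
  · ext i j
    simp [vecMulVec_apply, conjTranspose_apply, mul_comm]
  · intro x
    have h : vecMulVec v v *ᵥ x = (v ⬝ᵥ x) • v := by
      ext i
      simp [vecMulVec_apply, mulVec, dotProduct, Finset.mul_sum, mul_assoc, mul_comm,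
        mul_left_comm]
    rw [h]
    have : (star x : Fin d → ℝ) = x := by ext i; simp
    rw [this]
    have : x ⬝ᵥ ((v ⬝ᵥ x) • v) = (v ⬝ᵥ x) * (v ⬝ᵥ x) := by
      simp [dotProduct, Finset.mul_sum, Finset.sum_mul, mul_comm, mul_left_comm]
    rw [this]
    exact mul_self_nonneg _

lemma aux_inv_quad_le {d : ℕ} {A : Matrix (Fin d) (Fin d) ℝ} (hA : A.PosDef)
    (h : ∀ x : Fin d → ℝ, x ⬝ᵥ x ≤ x ⬝ᵥ A.mulVec x) (v : Fin d → ℝ) :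
    v ⬝ᵥ A⁻¹.mulVec v ≤ v ⬝ᵥ v := by
  set y := A⁻¹.mulVec v with hy
  have hAy : A.mulVec y = v := by
    rw [hy, mulVec_mulVec, Matrix.mul_nonsing_inv _ (isUnit_iff_ne_zero.2 hA.det_pos.ne'),
      one_mulVec]
  have h1 : y ⬝ᵥ y ≤ y ⬝ᵥ v := by
    have := h y
    rwa [hAy] at this
  have hcomm : v ⬝ᵥ y = y ⬝ᵥ v := dotProduct_comm _ _
  have cs : (v ⬝ᵥ y) ^ 2 ≤ (v ⬝ᵥ v) * (y ⬝ᵥ y) := by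
    have := Finset.sum_mul_sq_le_sq_mul_sq Finset.univ v y
    simpa [dotProduct, sq, Finset.mul_sum, mul_comm, mul_left_comm] using this
  have hyy : 0 ≤ y ⬝ᵥ y := aux_dot_self_nonneg y
  have hvv : 0 ≤ v ⬝ᵥ v := aux_dot_self_nonneg v
  have hc0 : 0 ≤ v ⬝ᵥ y := by rw [hcomm]; exact le_trans hyy h1
  rcases eq_or_lt_of_le hc0 with hc | hc
  · rw [← hc] at hcomm ⊢; linarith
  · rw [hcomm]
    nlinarith [cs, h1, hyy, hvv, hcomm]

lemma aux_det_step {d : ℕ} {A : Matrix (Fin d) (Fin d) ℝ} (hA : A.PosDef)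
    (v : Fin d → ℝ) :
    (A + vecMulVec v v).det = A.det * (1 + v ⬝ᵥ A⁻¹.mulVec v) := by
  rw [vecMulVec_eq Unit, det_add_replicateCol_mul_replicateRow (isUnit_iff_ne_zero.2 hA.det_pos.ne')]
  congr 1
  rw [det_unique]
  simp only [Pi.add_apply, Matrix.add_apply, Matrix.one_apply_eq, Matrix.mul_apply,
    Matrix.replicateRow_apply, Matrix.replicateCol_apply, mulVec, dotProduct]
  congr 1
  simp only [Finset.sum_mul, Finset.mul_sum]
  rw [Finset.sum_comm]
  exact Finset.sum_congr rfl fun i _ => Finset.sum_congr rfl fun j _ => by ring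

lemma aux_log_ineq {x : ℝ} (h0 : 0 ≤ x) (h1 : x ≤ 1) : x ≤ 2 * Real.log (1 + x) := by
  have hconv := convexOn_exp.2 (Set.mem_univ (0 : ℝ)) (Set.mem_univ (Real.log 2))
    (by linarith : (0:ℝ) ≤ 1 - x) h0 (by ring)
  rw [smul_eq_mul, smul_eq_mul, smul_eq_mul, smul_eq_mul, Real.exp_zero,
    Real.exp_log two_pos] at hconv
  have hexp : Real.exp (x * Real.log 2) ≤ 1 + x := by
    rw [show (1 - x) * 0 + x * Real.log 2 = x * Real.log 2 by ring] at hconv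
    linarith
  have hlog : x * Real.log 2 ≤ Real.log (1 + x) :=
    (Real.le_log_iff_exp_le (by linarith)).2 hexp
  have h2 : (0.6931471803 : ℝ) < Real.log 2 := Real.log_two_gt_d9
  nlinarith [hlog, h2, h0]

theorem stmt_6 {d : ℕ} (Λ₀ : Matrix (Fin d) (Fin d) ℝ) (hΛ₀ : Λ₀.PosDef)
    (hmin : ∀ x : Fin d → ℝ, x ⬝ᵥ x ≤ x ⬝ᵥ Λ₀.mulVec x)
    (t : ℕ) (φ : ℕ → (Fin d → ℝ)) (hφ : ∀ j < t, Real.sqrt (φ j ⬝ᵥ φ j) ≤ 1)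
    (Λ : ℕ → Matrix (Fin d) (Fin d) ℝ)
    (hΛ : ∀ j, Λ j = Λ₀ + ∑ i ∈ Finset.range j, vecMulVec (φ i) (φ i)) :
    Real.log ((Λ t).det / Λ₀.det) ≤
        ∑ j ∈ Finset.range t, φ j ⬝ᵥ (Λ j)⁻¹.mulVec (φ j) ∧
      ∑ j ∈ Finset.range t, φ j ⬝ᵥ (Λ j)⁻¹.mulVec (φ j) ≤
        2 * Real.log ((Λ t).det / Λ₀.det) := by
  have hsumPSD : ∀ j : ℕ, (∑ i ∈ Finset.range j, vecMulVec (φ i) (φ i)).PosSemidef := by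
    intro j
    induction j with
    | zero => simpa using (Matrix.PosSemidef.zero (n := Fin d) (R := ℝ))
    | succ n ih =>
      rw [Finset.sum_range_succ]
      exact ih.add (aux_vecMulVec_posSemidef (φ n))
  have hpos : ∀ j, (Λ j).PosDef := by
    intro j; rw [hΛ j]; exact hΛ₀.add_posSemidef (hsumPSD j)
  set x : ℕ → ℝ := fun j => φ j ⬝ᵥ (Λ j)⁻¹.mulVec (φ j) with hxdef
  have hx0 : ∀ j, 0 ≤ x j := by
    intro j
    have := ((hpos j).inv).posSemidef.dotProduct_mulVec_nonneg (φ j)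
    simpa [hxdef] using this
  have hmono : ∀ j (y : Fin d → ℝ), y ⬝ᵥ y ≤ y ⬝ᵥ (Λ j).mulVec y := by
    intro j y
    rw [hΛ j, add_mulVec, dotProduct_add]
    have hpsd := (hsumPSD j).dotProduct_mulVec_nonneg y
    have hsy : (star y : Fin d → ℝ) = y := by ext i; simp
    rw [hsy] at hpsd
    linarith [hmin y]
  have hx1 : ∀ j < t, x j ≤ 1 := by
    intro j hj
    have hb : φ j ⬝ᵥ φ j ≤ 1 := by
      have h0 := aux_dot_self_nonneg (φ j)
      nlinarith [Real.sq_sqrt h0, Real.sqrt_nonneg (φ j ⬝ᵥ φ j), hφ j hj]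
    exact le_trans (aux_inv_quad_le (hpos j) (hmono j) (φ j)) hb
  have hstep : ∀ j, (Λ (j + 1)).det = (Λ j).det * (1 + x j) := by
    intro j
    have : Λ (j + 1) = Λ j + vecMulVec (φ j) (φ j) := by
      rw [hΛ (j + 1), hΛ j, Finset.sum_range_succ, add_assoc]
    rw [this, aux_det_step (hpos j)]
  have hdetpos : ∀ j, 0 < (Λ j).det := fun j => (hpos j).det_pos
  have hlog : ∀ n : ℕ, Real.log ((Λ n).det / Λ₀.det)
      = ∑ j ∈ Finset.range n, Real.log (1 + x j) := by
    intro n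
    induction n with
    | zero =>
      have : Λ 0 = Λ₀ := by rw [hΛ 0]; simp
      simp [this, div_self hΛ₀.det_pos.ne']
    | succ n ih =>
      have h1x : (0:ℝ) < 1 + x n := by linarith [hx0 n]
      rw [Finset.sum_range_succ, ← ih, hstep n,
        show (Λ n).det * (1 + x n) / Λ₀.det = ((Λ n).det / Λ₀.det) * (1 + x n) by ring,
        Real.log_mul (div_ne_zero (hdetpos n).ne' hΛ₀.det_pos.ne') h1x.ne']
  rw [hlog t]
  constructor
  · apply Finset.sum_le_sum
    intro j _
    have h1x : (0:ℝ) < 1 + x j := by linarith [hx0 j]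
    have := Real.log_le_sub_one_of_pos h1x
    linarith
  · calc ∑ j ∈ Finset.range t, x j
        ≤ ∑ j ∈ Finset.range t, 2 * Real.log (1 + x j) :=
          Finset.sum_le_sum fun j hj =>
            aux_log_ineq (hx0 j) (hx1 j (Finset.mem_range.1 hj))
      _ = 2 * ∑ j ∈ Finset.range t, Real.log (1 + x j) := by rw [Finset.mul_sum]
end

section
/- Let X be a finite set, μ* a probability measure on X, c ≥ 1, and d_1,...,d_T probability measures on X with d_t(x) ≤ c·μ*(x) for all t, x. With τ(x) = min{t : ∑_{i<t} d_i(x) ≥ c·μ*(x)}, it holds that ∑_{t=1}^T ∑_x d_t(x)²·1[t ≥ τ(x)] / ∑_{i=1}^{t-1} d_i(x) ≤ 2c·∑_x μ*(x) · 2log(1+T) = O(c·log T). -/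
lemma aux_log16 (u : ℝ) (h0 : 0 ≤ u) (h1 : u ≤ 1) : u ≤ 2 * Real.log (1 + u) := by
  have hpos : (0:ℝ) < 1 + u := by linarith
  have h := Real.log_le_sub_one_of_pos (show (0:ℝ) < (1+u)⁻¹ by positivity)
  rw [Real.log_inv] at h
  have h2 : u / (1+u) ≤ Real.log (1+u) := by
    have he : 1 - (1+u)⁻¹ = u/(1+u) := by field_simp; ring
    linarith [he ▸ (by linarith : 1 - (1+u)⁻¹ ≤ Real.log (1+u))]
  have h4 : u/(1+u) * (1+u) = u := div_mul_cancel₀ _ (ne_of_gt hpos)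
  have hr : 0 ≤ u/(1+u) := by positivity
  nlinarith [h2, h4, hr, h1]

lemma aux_pot16 (a : ℝ) (ha : 0 < a) (e : ℕ → ℝ) (h0 : ∀ i, 0 ≤ e i)
    (h1 : ∀ i, e i ≤ a) (T : ℕ) :
    ∑ t ∈ Finset.range T, e t / (a + ∑ i ∈ Finset.range t, e i)
      ≤ 2 * (Real.log (a + ∑ i ∈ Finset.range T, e i) - Real.log a) := by
  induction T with
  | zero => simp
  | succ n ih =>
    have hS : 0 ≤ ∑ i ∈ Finset.range n, e i := Finset.sum_nonneg fun i _ => h0 i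
    set S := ∑ i ∈ Finset.range n, e i with hSdef
    have hb : 0 < a + S := by linarith
    have hu0 : 0 ≤ e n / (a + S) := div_nonneg (h0 n) hb.le
    have hu1 : e n / (a + S) ≤ 1 := by
      rw [div_le_one hb]; linarith [h1 n]
    have key := aux_log16 _ hu0 hu1
    have hlog : Real.log (a + (S + e n)) = Real.log (a + S) + Real.log (1 + e n / (a+S)) := by
      rw [← Real.log_mul (ne_of_gt hb) (by linarith : (0:ℝ) < 1 + e n/(a+S)).ne']
      congr 1
      field_simp
      ring
    rw [Finset.sum_range_succ, Finset.sum_range_succ, ← hSdef, hlog]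
    linarith [ih]

theorem stmt_16 {X : Type*} [Fintype X] (T : ℕ)
    (μ : X → ℝ) (hμ0 : ∀ x, 0 ≤ μ x) (hμ1 : ∑ x, μ x = 1)
    (d : ℕ → X → ℝ) (hd0 : ∀ t x, 0 ≤ d t x) (hd1 : ∀ t, ∑ x, d t x = 1)
    (c : ℝ) (hc : 1 ≤ c) (hdc : ∀ t x, d t x ≤ c * μ x) :
    ∑ t ∈ Finset.range T, ∑ x,
        (if c * μ x ≤ ∑ i ∈ Finset.range t, d i x then
          (d t x) ^ 2 / ∑ i ∈ Finset.range t, d i x else 0)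
      ≤ 4 * c * Real.log (1 + T) := by
  rw [Finset.sum_comm]
  have hcpos : (0:ℝ) < c := by linarith
  have hlogT : 0 ≤ Real.log (1 + (T:ℝ)) := Real.log_nonneg (le_add_of_nonneg_right (by positivity))
  have key : ∀ x : X, ∑ t ∈ Finset.range T,
      (if c * μ x ≤ ∑ i ∈ Finset.range t, d i x then
        (d t x) ^ 2 / ∑ i ∈ Finset.range t, d i x else 0)
      ≤ 4 * c * μ x * Real.log (1 + T) := by
    intro x
    rcases eq_or_lt_of_le (hμ0 x) with hμx | hμpos
    · have hd0' : ∀ t, d t x = 0 := fun t =>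
        le_antisymm (by have := hdc t x; rw [← hμx] at this; linarith) (hd0 t x)
      have : ∀ t ∈ Finset.range T,
          (if c * μ x ≤ ∑ i ∈ Finset.range t, d i x then
            (d t x) ^ 2 / ∑ i ∈ Finset.range t, d i x else 0) = 0 := by
        intro t _
        split <;> simp [hd0' t]
      rw [Finset.sum_congr rfl this]
      simp only [Finset.sum_const_zero]
      have : 0 ≤ 4 * c * μ x * Real.log (1 + (T:ℝ)) := by
        apply mul_nonneg
        apply mul_nonneg (by linarith) (hμ0 x)
        exact hlogT
      simpa using this
    · set a := c * μ x with hadef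
      have hapos : 0 < a := mul_pos hcpos hμpos
      have hSnn : ∀ t, 0 ≤ ∑ i ∈ Finset.range t, d i x :=
        fun t => Finset.sum_nonneg fun i _ => hd0 i x
      have hterm : ∀ t ∈ Finset.range T,
          (if c * μ x ≤ ∑ i ∈ Finset.range t, d i x then
            (d t x) ^ 2 / ∑ i ∈ Finset.range t, d i x else 0)
          ≤ 2 * a * (d t x / (a + ∑ i ∈ Finset.range t, d i x)) := by
        intro t _
        set S := ∑ i ∈ Finset.range t, d i x with hSdef
        have hS0 : 0 ≤ S := hSnn t
        have hrhs : 0 ≤ 2 * a * (d t x / (a + S)) := by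
          apply mul_nonneg (by linarith)
          apply div_nonneg (hd0 t x) (by linarith)
        split
        · rename_i hcond
          have hSpos : 0 < S := lt_of_lt_of_le hapos hcond
          rw [div_le_iff₀ hSpos] at *
          have h1 : (d t x)^2 ≤ a * d t x := by
            have := hdc t x
            nlinarith [hd0 t x]
          have h2 : 2 * a * (d t x / (a + S)) * S = 2 * a * d t x * (S / (a + S)) := by
            ring
          have h3 : a * d t x ≤ 2 * a * d t x * (S / (a + S)) := by
            have hfrac : (1:ℝ)/2 ≤ S / (a + S) := by
              rw [div_le_div_iff₀ (by norm_num) (by linarith)]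
              linarith
            nlinarith [mul_nonneg hapos.le (hd0 t x)]
          linarith [h1, h2 ▸ h3]
        · exact hrhs
      calc ∑ t ∈ Finset.range T,
            (if c * μ x ≤ ∑ i ∈ Finset.range t, d i x then
              (d t x) ^ 2 / ∑ i ∈ Finset.range t, d i x else 0)
          ≤ ∑ t ∈ Finset.range T, 2 * a * (d t x / (a + ∑ i ∈ Finset.range t, d i x)) :=
            Finset.sum_le_sum hterm
        _ = 2 * a * ∑ t ∈ Finset.range T, d t x / (a + ∑ i ∈ Finset.range t, d i x) := by
            rw [Finset.mul_sum]
        _ ≤ 2 * a * (2 * (Real.log (a + ∑ i ∈ Finset.range T, d i x) - Real.log a)) := by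
            apply mul_le_mul_of_nonneg_left _ (by linarith)
            exact aux_pot16 a hapos (fun i => d i x) (fun i => hd0 i x) (fun i => hdc i x) T
        _ ≤ 2 * a * (2 * Real.log (1 + T)) := by
            apply mul_le_mul_of_nonneg_left _ (by linarith)
            have hST : ∑ i ∈ Finset.range T, d i x ≤ T * a := by
              calc ∑ i ∈ Finset.range T, d i x ≤ ∑ _i ∈ Finset.range T, a :=
                    Finset.sum_le_sum fun i _ => hdc i x
                _ = T * a := by simp [mul_comm]
            have h1 : Real.log (a + ∑ i ∈ Finset.range T, d i x) ≤ Real.log (a * (1 + T)) := by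
              apply Real.log_le_log (by linarith [hSnn T])
              nlinarith
            rw [Real.log_mul hapos.ne' (by positivity)] at h1
            linarith
        _ = 4 * c * μ x * Real.log (1 + T) := by rw [hadef]; ring
  calc ∑ x, ∑ t ∈ Finset.range T,
        (if c * μ x ≤ ∑ i ∈ Finset.range t, d i x then
          (d t x) ^ 2 / ∑ i ∈ Finset.range t, d i x else 0)
      ≤ ∑ x, 4 * c * μ x * Real.log (1 + T) := Finset.sum_le_sum fun x _ => key x
    _ = 4 * c * Real.log (1 + T) := by
        rw [← Finset.sum_mul]
        have : ∑ x, 4 * c * μ x = 4 * c := by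
          rw [← Finset.mul_sum, hμ1, mul_one]
        rw [this]
end
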